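/- Let A be a unital C*-algebra, n ≥ 3 and k ≥ 1 integers, and p a family as in the context (a representation of Mor⁺(K_nᵏ, K_n)). If 𝐱₁, …, 𝐱ₙ : Fin k → Fin n satisfy 𝐱ᵢ(j) ≠ 𝐱ᵢ'(j) for all i ≠ i' and all j ∈ Fin k, then for every a ∈ Fin n one has p(𝐱₁, a) + p(𝐱₂, a) + ⋯ + p(𝐱ₙ, a) = 1. -/
import Mathlib


/-- **Lemma (sn-diagonals).** Let `A` be a unital C*-algebra, `n ≥ 3`, `k ≥ 1`, and
`p` a representation of `Mor⁺(K_nᵏ, K_n)`: each `p x a` is a projection, for each `x` the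
family `(p x a)_a` sums to `1`, and `p x a * p y a = 0` whenever `x i ≠ y i` for all `i`.
If `X 1, …, X n : Fin k → Fin n` pairwise differ in every coordinate, then
`p (X 1) a + ⋯ + p (X n) a = 1` for every `a`. -/
theorem stmt0 {A : Type*} [CStarAlgebra A]
    (n k : ℕ) (hn : 3 ≤ n) (hk : 1 ≤ k)
    (p : (Fin k → Fin n) → Fin n → A)
    (hidem : ∀ x a, p x a * p x a = p x a)
    (hsa : ∀ x a, star (p x a) = p x a)
    (hsum : ∀ x, ∑ a, p x a = 1)
    (horth : ∀ x y a, (∀ i, x i ≠ y i) → p x a * p y a = 0)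
    (X : Fin n → (Fin k → Fin n))
    (hX : ∀ i i', i ≠ i' → ∀ j, X i j ≠ X i' j)
    (a : Fin n) :
    ∑ i, p (X i) a = 1 := by
  letI := CStarAlgebra.spectralOrder A
  letI := CStarAlgebra.spectralOrderedRing A
  set Q : Fin n → A := fun b => ∑ i, p (X i) b with hQ
  have hQidem : ∀ b, Q b * Q b = Q b := by
    intro b
    rw [hQ]
    simp only [Finset.sum_mul, Finset.mul_sum]
    refine Finset.sum_congr rfl fun i _ => ?_
    rw [Finset.sum_eq_single i]
    · exact hidem _ _
    · intro i' _ hne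
      exact horth (X i') (X i) b (hX i' i hne)
    · intro h; exact absurd (Finset.mem_univ i) h
  have hQsa : ∀ b, star (Q b) = Q b := by
    intro b
    rw [hQ]
    simp only [star_sum]
    exact Finset.sum_congr rfl fun i _ => hsa _ _
  have hQnn : ∀ b, (0 : A) ≤ 1 - Q b := by
    intro b
    have h1 : (1 - Q b) = star (1 - Q b) * (1 - Q b) := by
      rw [star_sub, star_one, hQsa, sub_mul, one_mul, mul_sub, mul_one, hQidem,
        sub_self, sub_zero]
    rw [h1]
    exact star_mul_self_nonneg _
  have hsum0 : ∑ b : Fin n, ((1 : A) - Q b) = 0 := by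
    rw [Finset.sum_sub_distrib]
    have h2 : ∑ b : Fin n, Q b = ∑ b : Fin n, (1 : A) := by
      rw [hQ]
      rw [Finset.sum_comm]
      exact Finset.sum_congr rfl fun i _ => hsum (X i)
    rw [h2, sub_self]
  have key := (Finset.sum_eq_zero_iff_of_nonneg (fun b _ => hQnn b)).mp hsum0
  have ha := key a (Finset.mem_univ a)
  have : Q a = 1 := by
    have := sub_eq_zero.mp ha
    exact this.symm
  exact this
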